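/- arXiv:2602.02986 — 2 statements merged into one kernel-verified Lean document; each statement's English description precedes it below -/
import Mathlib

section
/- (Coherence bound in the CNN memorization model, part 2.) There exist absolute constants K, K₀ > 0 with the following property. In the signal-plus-noise Hessian model, let the noise vectors ξ_1,…,ξ_{n_r+n_f} be drawn i.i.d. from N(0, σ_n² I_d), set SNR = ‖μ‖/(σ_n √d), let the retain set consist of samples 1,…,n_r and the forget set of samples n_r+1,…,n_r+n_f, fix weights C'_r, C'_f > 0 with C'_r + C'_f = 1, and set D_{rf} = C'_r H_r + C'_f H_f. Then for every δ ∈ (0,1), whenever d ≥ K₀ log((n_r + n_f)/δ), with probability at least 1 − 8δ over the noise draws, uniformly over all choices of labels, weights ℓ''_i ∈ [0,1] and indicator bits: max over pairs (r,f) of λ_max(D_{rf}) ≤ K (C'_r + C'_f) d σ_n² (SNR² + 1). -/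
open Matrix Filter Finset Set
open scoped BigOperators

noncomputable section

/-- Frobenius norm of a real square matrix. -/
def frob {n : Type*} [Fintype n] (M : Matrix n n ℝ) : ℝ :=
  Real.sqrt (∑ i, ∑ j, (M i j) ^ 2)

open Classical in
/-- The positive semidefinite square root of a matrix (junk value `0` on non-PSD input). -/
def psdSqrt {n : Type*} [Fintype n] [DecidableEq n] (A : Matrix n n ℝ) : Matrix n n ℝ :=
  if h : A.PosSemidef then
    h.1.eigenvectorUnitary.1 * diagonal ((RCLike.ofReal : ℝ → ℝ) ∘ Real.sqrt ∘ h.1.eigenvalues) *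
      (star h.1.eigenvectorUnitary : Matrix n n ℝ)
  else 0

open Classical in
/-- The largest eigenvalue of a symmetric real matrix (junk value `0` otherwise). -/
def lamMax {n : Type*} [Fintype n] [DecidableEq n] (A : Matrix n n ℝ) : ℝ :=
  if h : A.IsHermitian then ⨆ i, h.eigenvalues i else 0

/-- Probability of observing the Bernoulli(B/n) selection pattern `x`. -/
def selProb (n B : ℕ) (x : Fin n → Bool) : ℝ :=
  ∏ i, if x i then (B : ℝ) / n else 1 - (B : ℝ) / n

/-- Average Hessian of a family. -/
def Hbar {d n : ℕ} (H : Fin n → Matrix (Fin d) (Fin d) ℝ) : Matrix (Fin d) (Fin d) ℝ :=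
  (n : ℝ)⁻¹ • ∑ i, H i

/-- Mean update operator `J = I − η(1−α)H_R + ηα H_F`. -/
def Jbar {d nr nf : ℕ} (η α : ℝ) (HR : Fin nr → Matrix (Fin d) (Fin d) ℝ)
    (HF : Fin nf → Matrix (Fin d) (Fin d) ℝ) : Matrix (Fin d) (Fin d) ℝ :=
  1 - (η * (1 - α)) • Hbar HR + (η * α) • Hbar HF

/-- Random update operator for the batch-selection pattern `x`. -/
def Jop {d nr nf : ℕ} (η α : ℝ) (B : ℕ) (HR : Fin nr → Matrix (Fin d) (Fin d) ℝ)
    (HF : Fin nf → Matrix (Fin d) (Fin d) ℝ)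
    (x : (Fin nr → Bool) × (Fin nf → Bool)) : Matrix (Fin d) (Fin d) ℝ :=
  1 - (η * (1 - α) / B) • (∑ r, if x.1 r then HR r else 0)
    + (η * α / B) • (∑ f, if x.2 f then HF f else 0)

/-- `C_r = η²(1−α)²(1/n_r)(1/B − 1/n_r)`. -/
def Crc (η α : ℝ) (B nr : ℕ) : ℝ :=
  η ^ 2 * (1 - α) ^ 2 * (nr : ℝ)⁻¹ * ((B : ℝ)⁻¹ - (nr : ℝ)⁻¹)

/-- `C_f = η²α²(1/n_f)(1/B − 1/n_f)`. -/
def Cfc (η α : ℝ) (B nf : ℕ) : ℝ :=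
  η ^ 2 * α ^ 2 * (nf : ℝ)⁻¹ * ((B : ℝ)⁻¹ - (nf : ℝ)⁻¹)

/-- Noise-accumulation matrices `N_k`. -/
def Nmat {d nr nf : ℕ} (η α : ℝ) (B : ℕ) (HR : Fin nr → Matrix (Fin d) (Fin d) ℝ)
    (HF : Fin nf → Matrix (Fin d) (Fin d) ℝ) : ℕ → Matrix (Fin d) (Fin d) ℝ
  | 0 => 1
  | k + 1 =>
      Cfc η α B nf • ∑ f, HF f * Nmat η α B HR HF k * HF f
        + Crc η α B nr • ∑ r, HR r * Nmat η α B HR HF k * HR r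

/-- `W_k = J_{k−1} ⋯ J_1 J_0` for a finite sequence of batch selections. -/
def Wk {d nr nf : ℕ} (η α : ℝ) (B : ℕ) (HR : Fin nr → Matrix (Fin d) (Fin d) ℝ)
    (HF : Fin nf → Matrix (Fin d) (Fin d) ℝ) {k : ℕ}
    (s : Fin k → (Fin nr → Bool) × (Fin nf → Bool)) : Matrix (Fin d) (Fin d) ℝ :=
  (List.ofFn fun i => Jop η α B HR HF (s i)).reverse.prod

/-- `E‖w_k‖² = E Tr(W_k W_kᵀ)`, the expectation taken over the i.i.d. Bernoulli
batch selections of the `k` steps. -/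
def Ewk2 {d nr nf : ℕ} (η α : ℝ) (B : ℕ) (HR : Fin nr → Matrix (Fin d) (Fin d) ℝ)
    (HF : Fin nf → Matrix (Fin d) (Fin d) ℝ) (k : ℕ) : ℝ :=
  ∑ s : Fin k → (Fin nr → Bool) × (Fin nf → Bool),
    (∏ i, selProb nr B (s i).1 * selProb nf B (s i).2) *
      (Wk η α B HR HF s * (Wk η α B HR HF s)ᵀ).trace

/-- `E[(e₁ᵀ w_k)²]`, i.e. the `(i0,i0)` entry of `E[W_k W_kᵀ]`. -/
def Ee1 {d nr nf : ℕ} (η α : ℝ) (B : ℕ) (HR : Fin nr → Matrix (Fin d) (Fin d) ℝ)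
    (HF : Fin nf → Matrix (Fin d) (Fin d) ℝ) (i0 : Fin d) (k : ℕ) : ℝ :=
  ∑ s : Fin k → (Fin nr → Bool) × (Fin nf → Bool),
    (∏ i, selProb nr B (s i).1 * selProb nf B (s i).2) *
      ((Wk η α B HR HF s * (Wk η α B HR HF s)ᵀ) i0 i0)

/-- Mixed Hessian `D_{rf} = C'_r H_r^R + C'_f H_f^F` for a retain/forget pair. -/
def Drf {d nr nf : ℕ} (Cr' Cf' : ℝ) (HR : Fin nr → Matrix (Fin d) (Fin d) ℝ)
    (HF : Fin nf → Matrix (Fin d) (Fin d) ℝ) (p : Fin nr × Fin nf) :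
    Matrix (Fin d) (Fin d) ℝ :=
  Cr' • HR p.1 + Cf' • HF p.2

/-- Mix-Hessian `D = (1/(n_r n_f)) Σ_{r,f} D_{rf}`. -/
def Dmix {d nr nf : ℕ} (Cr' Cf' : ℝ) (HR : Fin nr → Matrix (Fin d) (Fin d) ℝ)
    (HF : Fin nf → Matrix (Fin d) (Fin d) ℝ) : Matrix (Fin d) (Fin d) ℝ :=
  ((nr : ℝ) * nf)⁻¹ • ∑ p : Fin nr × Fin nf, Drf Cr' Cf' HR HF p

/-- Mix-coherence matrix `S_{(r,f),(r',f')} = ‖D_{rf}^{1/2} D_{r'f'}^{1/2}‖_F`. -/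
def Smat {d nr nf : ℕ} (Cr' Cf' : ℝ) (HR : Fin nr → Matrix (Fin d) (Fin d) ℝ)
    (HF : Fin nf → Matrix (Fin d) (Fin d) ℝ) :
    Matrix (Fin nr × Fin nf) (Fin nr × Fin nf) ℝ :=
  Matrix.of fun p q =>
    frob (psdSqrt (Drf Cr' Cf' HR HF p) * psdSqrt (Drf Cr' Cf' HR HF q))

/-- Unlearning coherence `σ = λ_max(S) / max_{(r,f)} λ_max(D_{rf})`. -/
def cohSigma {d nr nf : ℕ} (Cr' Cf' : ℝ) (HR : Fin nr → Matrix (Fin d) (Fin d) ℝ)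
    (HF : Fin nf → Matrix (Fin d) (Fin d) ℝ) : ℝ :=
  lamMax (Smat Cr' Cf' HR HF) / ⨆ p : Fin nr × Fin nf, lamMax (Drf Cr' Cf' HR HF p)

/-- Stacked filter-weight vector of the two-layer ReLU CNN signal-plus-noise model. -/
def wvec (d mfil : ℕ) (μ ξi : Fin d → ℝ) (yi : ℝ)
    (ai bi : Bool → Fin mfil → Bool) : (Bool × Fin mfil) × Fin d → ℝ :=
  fun p =>
    ((if p.1.1 then (1 : ℝ) else -1) / mfil) *
      ((if ai p.1.1 p.1.2 then (1 : ℝ) else 0) * μ p.2 +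
        (if bi p.1.1 p.1.2 then (1 : ℝ) else 0) * yi * ξi p.2)

/-- Per-sample Hessian `H_i = ℓ''_i w_i w_iᵀ` of the signal-plus-noise model. -/
def hessCNN (d mfil : ℕ) (μ ξi : Fin d → ℝ) (yi ℓi : ℝ)
    (ai bi : Bool → Fin mfil → Bool) :
    Matrix ((Bool × Fin mfil) × Fin d) ((Bool × Fin mfil) × Fin d) ℝ :=
  ℓi • vecMulVec (wvec d mfil μ ξi yi ai bi) (wvec d mfil μ ξi yi ai bi)

/-- Mixed Hessian `D_{rf} = C'_r H_r + C'_f H_{n_r+f}` in the CNN model, with the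
retain set given by the first `n_r` samples and the forget set by the last `n_f`. -/
def DrfCNN (d mfil nr nf : ℕ) (μ : Fin d → ℝ) (ξ : Fin (nr + nf) → Fin d → ℝ)
    (y ℓ : Fin (nr + nf) → ℝ) (a b : Fin (nr + nf) → Bool → Fin mfil → Bool)
    (Cr' Cf' : ℝ) (p : Fin nr × Fin nf) :
    Matrix ((Bool × Fin mfil) × Fin d) ((Bool × Fin mfil) × Fin d) ℝ :=
  Cr' • hessCNN d mfil μ (ξ (Fin.castAdd nf p.1)) (y (Fin.castAdd nf p.1))
        (ℓ (Fin.castAdd nf p.1)) (a (Fin.castAdd nf p.1)) (b (Fin.castAdd nf p.1))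
    + Cf' • hessCNN d mfil μ (ξ (Fin.natAdd nr p.2)) (y (Fin.natAdd nr p.2))
        (ℓ (Fin.natAdd nr p.2)) (a (Fin.natAdd nr p.2)) (b (Fin.natAdd nr p.2))

/-- Mix-coherence matrix of the CNN model. -/
def SmatCNN (d mfil nr nf : ℕ) (μ : Fin d → ℝ) (ξ : Fin (nr + nf) → Fin d → ℝ)
    (y ℓ : Fin (nr + nf) → ℝ) (a b : Fin (nr + nf) → Bool → Fin mfil → Bool)
    (Cr' Cf' : ℝ) : Matrix (Fin nr × Fin nf) (Fin nr × Fin nf) ℝ :=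
  Matrix.of fun p q =>
    frob (psdSqrt (DrfCNN d mfil nr nf μ ξ y ℓ a b Cr' Cf' p) *
      psdSqrt (DrfCNN d mfil nr nf μ ξ y ℓ a b Cr' Cf' q))


section AuxStmt6

open MeasureTheory ProbabilityTheory Real
open scoped ENNReal NNReal

lemma aux_iIndepFun_ae_congr {Ω ι : Type*} [MeasurableSpace Ω] {μ : Measure Ω}
    {f g : ι → Ω → ℝ} (hfg : ∀ i, f i =ᵐ[μ] g i)
    (hf : iIndepFun f μ) :
    iIndepFun g μ := by
  rw [iIndepFun_iff_measure_inter_preimage_eq_mul] at hf ⊢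
  intro S sets hsets
  have hae : ∀ i : ι, f i ⁻¹' sets i =ᵐ[μ] g i ⁻¹' sets i := by
    intro i
    filter_upwards [hfg i] with ω hω
    exact congrArg (sets i) hω
  have h1 : (⋂ i ∈ S, f i ⁻¹' sets i) =ᵐ[μ] (⋂ i ∈ S, g i ⁻¹' sets i) := by
    have : ∀ᵐ ω ∂μ, ∀ i ∈ S, (ω ∈ f i ⁻¹' sets i ↔ ω ∈ g i ⁻¹' sets i) := by
      rw [Filter.eventually_all_finset]
      intro i _
      filter_upwards [hfg i] with ω hω
      simp [Set.mem_preimage, hω]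
    rw [Filter.eventuallyEq_set]
    filter_upwards [this] with ω hω
    simp only [Set.mem_iInter]
    exact ⟨fun h i hi => (hω i hi).1 (h i hi), fun h i hi => (hω i hi).2 (h i hi)⟩
  rw [← measure_congr h1, hf S hsets]
  exact Finset.prod_congr rfl fun i _ => measure_congr (hae i)

lemma aux_iIndepFun_reindex {Ω ι κ : Type*} [MeasurableSpace Ω] {μ : Measure Ω}
    {f : ι → Ω → ℝ} (hf : iIndepFun f μ)
    (g : κ → ι) (hg : Function.Injective g) :
    iIndepFun (fun k => f (g k)) μ := by
  classical
  rw [iIndepFun_iff_measure_inter_preimage_eq_mul] at hf ⊢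
  intro S sets hsets
  set sets' : ι → Set ℝ := fun i =>
    if h : ∃ k ∈ S, g k = i then sets h.choose else Set.univ with hsets'def
  have hkey : ∀ k ∈ S, sets' (g k) = sets k := by
    intro k hk
    have h : ∃ k' ∈ S, g k' = g k := ⟨k, hk, rfl⟩
    have : h.choose = k := hg h.choose_spec.2
    simp [hsets'def, dif_pos h, this]
  have hsets'meas : ∀ i ∈ S.image g, MeasurableSet (sets' i) := by
    intro i hi
    rw [Finset.mem_image] at hi
    obtain ⟨k, hk, rfl⟩ := hi
    rw [hkey k hk]; exact hsets k hk
  have := hf (S.image g) hsets'meas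
  rw [Finset.prod_image (fun a ha b hb h => hg h)] at this
  have hint : (⋂ i ∈ S.image g, f i ⁻¹' sets' i) = ⋂ k ∈ S, f (g k) ⁻¹' sets k := by
    ext ω
    simp only [Set.mem_iInter, Finset.mem_image]
    constructor
    · intro h k hk
      have := h (g k) ⟨k, hk, rfl⟩
      rwa [hkey k hk] at this
    · rintro h i ⟨k, hk, rfl⟩
      rw [hkey k hk]; exact h k hk
  rw [hint] at this
  rw [this]
  exact Finset.prod_congr rfl fun k hk => by rw [hkey k hk]

lemma aux_pdf_key {σ : ℝ} (hσ : 0 < σ) :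
    (fun x => ((gaussianPDFReal 0 ⟨σ^2, sq_nonneg σ⟩ x).toNNReal : ℝ) *
        Real.exp ((1/(4*σ^2)) * x^2)) =
      fun x => (Real.sqrt (2*π*σ^2))⁻¹ * Real.exp (-(1/(4*σ^2)) * x^2) := by
  funext x
  have hpdf : (0:ℝ) ≤ gaussianPDFReal 0 ⟨σ^2, sq_nonneg σ⟩ x :=
    gaussianPDFReal_nonneg _ _ _
  rw [Real.coe_toNNReal _ hpdf]
  change (Real.sqrt (2*π*σ^2))⁻¹ * Real.exp (-(x - 0)^2 / (2*σ^2)) *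
    Real.exp ((1/(4*σ^2)) * x^2) = _
  rw [mul_assoc, ← Real.exp_add]
  congr 1
  have hσ2 : σ^2 ≠ 0 := by positivity
  field_simp
  ring

lemma aux_gauss_integrable {σ : ℝ} (hσ : 0 < σ) :
    Integrable (fun x => Real.exp ((1/(4*σ^2)) * x^2))
      (gaussianReal 0 ⟨σ^2, sq_nonneg σ⟩) := by
  have hv : (⟨σ^2, sq_nonneg σ⟩ : NNReal) ≠ 0 := by
    intro h
    have h2 := congrArg NNReal.toReal h
    change σ^2 = (0:ℝ) at h2
    exact (by positivity : σ^2 ≠ 0) h2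
  rw [gaussianReal_of_var_ne_zero _ hv]
  have hd : (gaussianPDF 0 ⟨σ^2, sq_nonneg σ⟩) =
      fun x => ((gaussianPDFReal 0 ⟨σ^2, sq_nonneg σ⟩ x).toNNReal : ℝ≥0∞) := by
    funext x; rfl
  rw [hd]; refine (integrable_withDensity_iff_integrable_smul
    ((measurable_gaussianPDFReal _ _).real_toNNReal)).mpr ?_
  simp only [NNReal.smul_def, smul_eq_mul]
  rw [aux_pdf_key hσ]
  exact (integrable_exp_neg_mul_sq (by positivity)).const_mul _

lemma aux_gauss_integral {σ : ℝ} (hσ : 0 < σ) :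
    ∫ x, Real.exp ((1/(4*σ^2)) * x^2) ∂(gaussianReal 0 ⟨σ^2, sq_nonneg σ⟩) =
      Real.sqrt 2 := by
  have hv : (⟨σ^2, sq_nonneg σ⟩ : NNReal) ≠ 0 := by
    intro h
    have h2 := congrArg NNReal.toReal h
    change σ^2 = (0:ℝ) at h2
    exact (by positivity : σ^2 ≠ 0) h2
  rw [gaussianReal_of_var_ne_zero _ hv]
  have hd : (gaussianPDF 0 ⟨σ^2, sq_nonneg σ⟩) =
      fun x => ((gaussianPDFReal 0 ⟨σ^2, sq_nonneg σ⟩ x).toNNReal : ℝ≥0∞) := by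
    funext x; rfl
  rw [hd]; refine (integral_withDensity_eq_integral_smul
    ((measurable_gaussianPDFReal _ _).real_toNNReal) _).trans ?_
  simp only [NNReal.smul_def, smul_eq_mul]
  rw [aux_pdf_key hσ, MeasureTheory.integral_const_mul, integral_gaussian]
  rw [← Real.sqrt_inv, ← Real.sqrt_mul (by positivity)]
  congr 1
  have hσ2 : σ^2 ≠ 0 := by positivity
  have hπ : π ≠ 0 := Real.pi_ne_zero
  field_simp
  ring

lemma aux_chernoff {Ω : Type} [MeasurableSpace Ω] (P : Measure Ω) [IsProbabilityMeasure P]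
    {d : ℕ} {σ : ℝ} (hσ : 0 < σ)
    (X : Fin d → Ω → ℝ) (hmeas : ∀ c, Measurable (X c))
    (hindep : iIndepFun X P)
    (hmap : ∀ c, Measure.map (X c) P = gaussianReal 0 ⟨σ^2, sq_nonneg σ⟩) :
    P {ω | 4 * d * σ ^ 2 ≤ ∑ c, (X c ω) ^ 2} ≤
      ENNReal.ofReal (Real.exp (-(d:ℝ)/2)) := by
  set t : ℝ := 1 / (4 * σ^2) with ht
  have ht0 : 0 < t := by positivity
  set Y : Fin d → Ω → ℝ := fun c ω => (X c ω) ^ 2 with hY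
  have hYmeas : ∀ c, Measurable (Y c) := fun c => (hmeas c).pow_const 2
  have hYindep : iIndepFun Y P := by
    have := hindep.comp (fun _ => fun x : ℝ => x ^ 2)
      (fun _ => measurable_id.pow_const 2)
    exact this
  have h_int : ∀ c, Integrable (fun ω => Real.exp (t * Y c ω)) P := by
    intro c
    have hg : AEStronglyMeasurable (fun x : ℝ => Real.exp (t * x ^ 2))
        (Measure.map (X c) P) :=
      (Continuous.aestronglyMeasurable (by continuity))
    have := (integrable_map_measure hg (hmeas c).aemeasurable).mp
      (by rw [hmap c]; exact aux_gauss_integrable hσ)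
    simpa [Function.comp_def, hY, ht] using this
  have h_int_sum : Integrable (fun ω => Real.exp (t * (∑ c, Y c) ω)) P :=
    hYindep.integrable_exp_mul_sum hYmeas (fun c _ => h_int c)
  have hmgf_one : ∀ c, mgf (Y c) P t = Real.sqrt 2 := by
    intro c
    have hg : AEStronglyMeasurable (fun x : ℝ => Real.exp (t * x ^ 2))
        (Measure.map (X c) P) :=
      (Continuous.aestronglyMeasurable (by continuity))
    rw [mgf]
    have : ∫ ω, Real.exp (t * Y c ω) ∂P
        = ∫ x, Real.exp (t * x ^ 2) ∂(Measure.map (X c) P) := by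
      rw [integral_map (hmeas c).aemeasurable hg]
    rw [this, hmap c]
    simpa [ht] using aux_gauss_integral hσ
  have hmgf : mgf (∑ c, Y c) P t = (Real.sqrt 2) ^ (d : ℕ) := by
    rw [hYindep.mgf_sum hYmeas Finset.univ]
    simp [hmgf_one]
  have hchern := measure_ge_le_exp_mul_mgf (X := ∑ c, Y c) (μ := P)
    (4 * d * σ ^ 2) (le_of_lt ht0) h_int_sum
  rw [hmgf] at hchern
  have hset : {ω | 4 * d * σ ^ 2 ≤ ∑ c, (X c ω) ^ 2}
      = {ω | 4 * d * σ ^ 2 ≤ (∑ c, Y c) ω} := by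
    ext ω; simp [hY, Finset.sum_apply]
  rw [hset]
  have hbound : Real.exp (-t * (4 * d * σ ^ 2)) * Real.sqrt 2 ^ (d:ℕ)
      ≤ Real.exp (-(d:ℝ)/2) := by
    have hts : t * (4 * σ ^ 2) = 1 := by
      rw [ht]; field_simp
    have h1 : (-t * (4 * d * σ ^ 2)) = -(d:ℝ) := by
      have h2 : t * (4 * (d:ℝ) * σ ^ 2) = (d:ℝ) * (t * (4 * σ ^ 2)) := by ring
      rw [neg_mul, h2, hts, mul_one]
    rw [h1]
    have hsq : Real.sqrt 2 ^ (d:ℕ) = Real.exp ((d:ℝ) * Real.log (Real.sqrt 2)) := by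
      rw [Real.exp_nat_mul, Real.exp_log (by positivity)]
    rw [hsq, ← Real.exp_add]
    apply Real.exp_le_exp.mpr
    have hlog : Real.log (Real.sqrt 2) ≤ 1 / 2 := by
      rw [Real.log_sqrt (by norm_num)]
      nlinarith [Real.log_two_lt_d9]
    nlinarith [Nat.cast_nonneg (α := ℝ) d]
  refine le_trans ?_ (ENNReal.ofReal_le_ofReal hbound)
  rw [← ENNReal.ofReal_toReal (measure_ne_top P _)]
  exact ENNReal.ofReal_le_ofReal hchern

lemma aux_vecMulVec_isHermitian {n : Type*} [Fintype n] (v : n → ℝ) :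
    (Matrix.vecMulVec v v).IsHermitian := by
  ext i j
  simp [Matrix.conjTranspose_apply, Matrix.vecMulVec_apply, mul_comm]

lemma aux_isHermitian_smul {n : Type*} [Fintype n] {M : Matrix n n ℝ}
    (h : M.IsHermitian) (c : ℝ) : (c • M).IsHermitian := by
  unfold Matrix.IsHermitian at *
  rw [Matrix.conjTranspose_smul, star_trivial, h]

lemma aux_lamMax_le {n : Type*} [Fintype n] [DecidableEq n] [Nonempty n]
    {A : Matrix n n ℝ} (hA : A.IsHermitian) {C : ℝ}
    (h : ∀ v : n → ℝ, (∑ x, v x ^ 2) = 1 → dotProduct v (A *ᵥ v) ≤ C) :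
    lamMax A ≤ C := by
  rw [lamMax, dif_pos hA]
  apply ciSup_le
  intro i
  rw [hA.eigenvalues_eq i]
  have hnorm : ‖hA.eigenvectorBasis i‖ = 1 := hA.eigenvectorBasis.orthonormal.1 i
  have hsum : (∑ x, (hA.eigenvectorBasis i) x ^ 2) = 1 := by
    rw [EuclideanSpace.norm_eq] at hnorm
    have := congrArg (fun t => t ^ 2) hnorm
    simp only [one_pow] at this
    rw [Real.sq_sqrt (by positivity)] at this
    simpa [Real.norm_eq_abs, sq_abs] using this
  have := h (fun x => hA.eigenvectorBasis i x) hsum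
  simpa [dotProduct] using this

lemma aux_quad_vecMulVec {n : Type*} [Fintype n] (v w : n → ℝ) :
    dotProduct v (Matrix.vecMulVec w w *ᵥ v) = (dotProduct w v) ^ 2 := by
  have h1 : Matrix.vecMulVec w w *ᵥ v = (dotProduct w v) • w := by
    ext x
    simp only [Matrix.mulVec, dotProduct, Matrix.vecMulVec_apply, Pi.smul_apply,
      smul_eq_mul, Finset.sum_mul, Finset.mul_sum]
    exact Finset.sum_congr rfl fun y _ => by ring
  rw [h1, dotProduct_smul, smul_eq_mul, dotProduct_comm]
  ring

lemma aux_wvec_sq {d mfil : ℕ} (hm : 1 ≤ mfil) (μ ξi : Fin d → ℝ) {yi : ℝ}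
    (hy : yi = 1 ∨ yi = -1) (ai bi : Bool → Fin mfil → Bool) :
    ∑ p, (wvec d mfil μ ξi yi ai bi p) ^ 2 ≤
      4 * ((∑ c, μ c ^ 2) + ∑ c, ξi c ^ 2) := by
  have hm' : (1:ℝ) ≤ (mfil:ℝ) := by exact_mod_cast hm
  have hmpos : (0:ℝ) < (mfil:ℝ) := lt_of_lt_of_le one_pos hm'
  have hpoint : ∀ p : (Bool × Fin mfil) × Fin d,
      (wvec d mfil μ ξi yi ai bi p) ^ 2 ≤
        ((mfil:ℝ)^2)⁻¹ * (2 * μ p.2 ^ 2 + 2 * ξi p.2 ^ 2) := by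
    intro p
    unfold wvec
    rw [mul_pow, div_pow]
    have hsign : ((if p.1.1 then (1:ℝ) else -1)) ^ 2 = 1 := by
      by_cases h : p.1.1 <;> simp [h]
    rw [hsign]
    rw [one_div, ← mul_le_mul_iff_right₀ (show (0:ℝ) < (mfil:ℝ)^2 by positivity)]
    rw [← mul_assoc, ← mul_assoc, mul_inv_cancel₀ (by positivity), one_mul, one_mul]
    have hA : ((if ai p.1.1 p.1.2 then (1:ℝ) else 0) * μ p.2) ^ 2 ≤ μ p.2 ^ 2 := by
      by_cases h : ai p.1.1 p.1.2
      · simp [h]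
      · simp [h]; positivity
    have hB : ((if bi p.1.1 p.1.2 then (1:ℝ) else 0) * yi * ξi p.2) ^ 2 ≤ ξi p.2 ^ 2 := by
      have hy2 : yi ^ 2 = 1 := by rcases hy with h | h <;> simp [h]
      by_cases h : bi p.1.1 p.1.2
      · simp only [h, if_true, one_mul, mul_pow, hy2]
        simp
      · simp [h]; positivity
    nlinarith [sq_nonneg ((if ai p.1.1 p.1.2 then (1:ℝ) else 0) * μ p.2 -
      (if bi p.1.1 p.1.2 then (1:ℝ) else 0) * yi * ξi p.2)]
  calc ∑ p, (wvec d mfil μ ξi yi ai bi p) ^ 2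
      ≤ ∑ p : (Bool × Fin mfil) × Fin d,
          ((mfil:ℝ)^2)⁻¹ * (2 * μ p.2 ^ 2 + 2 * ξi p.2 ^ 2) :=
        Finset.sum_le_sum fun p _ => hpoint p
    _ = ((2 * mfil) * ((mfil:ℝ)^2)⁻¹ * 2) * ((∑ c, μ c ^ 2) + ∑ c, ξi c ^ 2) := by
        have hinner : (∑ c, ((mfil:ℝ)^2)⁻¹ * (2 * μ c ^ 2 + 2 * ξi c ^ 2))
            = ((mfil:ℝ)^2)⁻¹ * 2 * ((∑ c, μ c ^ 2) + ∑ c, ξi c ^ 2) := by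
          rw [← Finset.mul_sum, Finset.sum_add_distrib, ← Finset.mul_sum, ← Finset.mul_sum]
          ring
        rw [Fintype.sum_prod_type]
        simp only [hinner]
        rw [Finset.sum_const, Finset.card_univ, Fintype.card_prod, Fintype.card_bool,
          Fintype.card_fin, nsmul_eq_mul]
        push_cast
        ring
    _ ≤ 4 * ((∑ c, μ c ^ 2) + ∑ c, ξi c ^ 2) := by
        have hS : (0:ℝ) ≤ (∑ c, μ c ^ 2) + ∑ c, ξi c ^ 2 := by positivity
        have h4m : (2 * (mfil:ℝ)) * ((mfil:ℝ)^2)⁻¹ * 2 ≤ 4 := by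
          have he : (2 * (mfil:ℝ)) * ((mfil:ℝ)^2)⁻¹ * 2 = 4 / mfil := by
            field_simp
            ring
          rw [he]
          exact div_le_self (by norm_num) hm'
        exact mul_le_mul_of_nonneg_right h4m hS

lemma aux_det {d mfil nr nf : ℕ} (hm : 1 ≤ mfil) (hd : 1 ≤ d)
    (μ : Fin d → ℝ) {σn : ℝ} (hσ : 0 < σn) {Cr' Cf' : ℝ} (hCr : 0 ≤ Cr') (hCf : 0 ≤ Cf')
    (ξ : Fin (nr + nf) → Fin d → ℝ)
    (hξ : ∀ i, ∑ c, (ξ i c) ^ 2 ≤ 4 * d * σn ^ 2)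
    (y ℓ : Fin (nr + nf) → ℝ) (a b : Fin (nr + nf) → Bool → Fin mfil → Bool)
    (hy : ∀ i, y i = 1 ∨ y i = -1) (hℓ : ∀ i, ℓ i ∈ Set.Icc (0 : ℝ) 1)
    (p : Fin nr × Fin nf) :
    lamMax (DrfCNN d mfil nr nf μ ξ y ℓ a b Cr' Cf' p) ≤
      16 * (Cr' + Cf') * d * σn ^ 2 *
        ((Real.sqrt (∑ c, (μ c) ^ 2) / (σn * Real.sqrt d)) ^ 2 + 1) := by
  have hd' : (1:ℝ) ≤ (d:ℝ) := by exact_mod_cast hd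
  have hdpos : (0:ℝ) < d := lt_of_lt_of_le one_pos hd'
  set Sμ := ∑ c, (μ c) ^ 2 with hSμ
  have hSμ0 : 0 ≤ Sμ := by positivity
  have hRHS : 16 * (Cr' + Cf') * d * σn ^ 2 *
      ((Real.sqrt Sμ / (σn * Real.sqrt d)) ^ 2 + 1)
      = 16 * (Cr' + Cf') * (Sμ + d * σn ^ 2) := by
    rw [div_pow, mul_pow, Real.sq_sqrt hSμ0, Real.sq_sqrt (le_of_lt hdpos)]
    field_simp
  rw [hRHS]
  haveI : NeZero mfil := ⟨Nat.one_le_iff_ne_zero.mp hm⟩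
  haveI : NeZero d := ⟨Nat.one_le_iff_ne_zero.mp hd⟩
  set ir := Fin.castAdd nf p.1
  set jf := Fin.natAdd nr p.2
  set w1 := wvec d mfil μ (ξ ir) (y ir) (a ir) (b ir) with hw1
  set w2 := wvec d mfil μ (ξ jf) (y jf) (a jf) (b jf) with hw2
  have hH : (DrfCNN d mfil nr nf μ ξ y ℓ a b Cr' Cf' p).IsHermitian := by
    unfold DrfCNN hessCNN
    exact (aux_isHermitian_smul (aux_isHermitian_smul (aux_vecMulVec_isHermitian _) _) _).add
      (aux_isHermitian_smul (aux_isHermitian_smul (aux_vecMulVec_isHermitian _) _) _)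
  apply aux_lamMax_le hH
  intro v hv
  have hquad : dotProduct v ((DrfCNN d mfil nr nf μ ξ y ℓ a b Cr' Cf' p) *ᵥ v)
      = Cr' * (ℓ ir * (dotProduct w1 v) ^ 2)
        + Cf' * (ℓ jf * (dotProduct w2 v) ^ 2) := by
    unfold DrfCNN hessCNN
    rw [Matrix.add_mulVec, dotProduct_add]
    rw [Matrix.smul_mulVec, Matrix.smul_mulVec,
      Matrix.smul_mulVec, Matrix.smul_mulVec]
    rw [dotProduct_smul, dotProduct_smul, dotProduct_smul,
      dotProduct_smul]
    rw [aux_quad_vecMulVec, aux_quad_vecMulVec]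
    simp [smul_eq_mul, hw1, hw2]
    rfl
  rw [hquad]
  have hCS : ∀ w : (Bool × Fin mfil) × Fin d → ℝ,
      (dotProduct w v) ^ 2 ≤ ∑ x, w x ^ 2 := by
    intro w
    have := Finset.sum_mul_sq_le_sq_mul_sq Finset.univ w v
    rw [hv, mul_one] at this
    exact this
  have hb1 : (dotProduct w1 v) ^ 2 ≤ 4 * Sμ + 16 * d * σn ^ 2 := by
    refine le_trans (hCS w1) (le_trans (aux_wvec_sq hm μ (ξ ir) (hy ir) (a ir) (b ir)) ?_)
    have := hξ ir
    nlinarith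
  have hb2 : (dotProduct w2 v) ^ 2 ≤ 4 * Sμ + 16 * d * σn ^ 2 := by
    refine le_trans (hCS w2) (le_trans (aux_wvec_sq hm μ (ξ jf) (hy jf) (a jf) (b jf)) ?_)
    have := hξ jf
    nlinarith
  obtain ⟨hℓr0, hℓr1⟩ := hℓ ir
  obtain ⟨hℓf0, hℓf1⟩ := hℓ jf
  have hq1 : 0 ≤ (dotProduct w1 v) ^ 2 := sq_nonneg _
  have hq2 : 0 ≤ (dotProduct w2 v) ^ 2 := sq_nonneg _
  have hdσ : 0 ≤ (d:ℝ) * σn ^ 2 := by positivity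
  have h1 : Cr' * (ℓ ir * (dotProduct w1 v) ^ 2)
      ≤ Cr' * (16 * (Sμ + d * σn ^ 2)) := by
    apply mul_le_mul_of_nonneg_left _ hCr
    nlinarith
  have h2 : Cf' * (ℓ jf * (dotProduct w2 v) ^ 2)
      ≤ Cf' * (16 * (Sμ + d * σn ^ 2)) := by
    apply mul_le_mul_of_nonneg_left _ hCf
    nlinarith
  nlinarith [h1, h2]

end AuxStmt6

open MeasureTheory ProbabilityTheory in
/-- coherence bound in the CNN memorization model, part 2.
There are absolute constants `K, K₀ > 0` such that, with i.i.d. `N(0, σ_n² I_d)` noise,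
for every `δ ∈ (0,1)`, whenever `d ≥ K₀ log((n_r+n_f)/δ)`, with probability at least
`1 − 8δ`, uniformly over labels, weights and indicator bits,
`max_{(r,f)} λ_max(D_{rf}) ≤ K (C'_r + C'_f) d σ_n² (SNR² + 1)`. -/
theorem stmt6 :
    ∃ K K₀ : ℝ, 0 < K ∧ 0 < K₀ ∧
      ∀ (d nr nf mfil : ℕ), 1 ≤ mfil →
      ∀ (μ : Fin d → ℝ) (σn : ℝ), 0 < σn →
      ∀ (Cr' Cf' : ℝ), 0 < Cr' → 0 < Cf' → Cr' + Cf' = 1 →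
      ∀ δ : ℝ, δ ∈ Set.Ioo (0 : ℝ) 1 →
      K₀ * Real.log (((nr : ℝ) + nf) / δ) ≤ (d : ℝ) →
      ∀ (Ω : Type) (_ : MeasurableSpace Ω) (P : Measure Ω), IsProbabilityMeasure P →
      ∀ ξ : Fin (nr + nf) → Fin d → Ω → ℝ,
        iIndepFun
          (fun (p : Fin (nr + nf) × Fin d) ω => ξ p.1 p.2 ω) P →
        (∀ i c, Measure.map (ξ i c) P = gaussianReal 0 ⟨σn ^ 2, sq_nonneg σn⟩) →
        ENNReal.ofReal (1 - 8 * δ) ≤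
          P {ω | ∀ (y ℓ : Fin (nr + nf) → ℝ)
              (a b : Fin (nr + nf) → Bool → Fin mfil → Bool),
              (∀ i, y i = 1 ∨ y i = -1) → (∀ i, ℓ i ∈ Set.Icc (0 : ℝ) 1) →
              ∀ p : Fin nr × Fin nf,
                lamMax (DrfCNN d mfil nr nf μ (fun i c => ξ i c ω) y ℓ a b Cr' Cf' p) ≤
                  K * (Cr' + Cf') * d * σn ^ 2 *
                    ((Real.sqrt (∑ c, (μ c) ^ 2) / (σn * Real.sqrt d)) ^ 2 + 1)} := by
  refine ⟨16, 2, by norm_num, by norm_num, ?_⟩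
  intro d nr nf mfil hm μ σn hσ Cr' Cf' hCr hCf hCsum δ hδ hd Ω mΩ P hP ξ hindep hmap
  obtain ⟨hδ0, hδ1⟩ := hδ
  rcases Nat.eq_zero_or_pos nr with hnr | hnr
  · refine le_trans (le_trans (ENNReal.ofReal_le_one.mpr (by linarith))
      (le_of_eq measure_univ.symm)) (measure_mono fun ω _ => ?_)
    intro y ℓ a b hy hℓ p
    exact absurd p.1.isLt (by omega)
  rcases Nat.eq_zero_or_pos nf with hnf | hnf
  · refine le_trans (le_trans (ENNReal.ofReal_le_one.mpr (by linarith))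
      (le_of_eq measure_univ.symm)) (measure_mono fun ω _ => ?_)
    intro y ℓ a b hy hℓ p
    exact absurd p.2.isLt (by omega)
  -- main case : nr ≥ 1, nf ≥ 1
  have hn2 : (2:ℝ) ≤ (nr:ℝ) + nf := by
    have h1 : (1:ℝ) ≤ (nr:ℝ) := by exact_mod_cast hnr
    have h2 : (1:ℝ) ≤ (nf:ℝ) := by exact_mod_cast hnf
    linarith
  have hnpos : (0:ℝ) < (nr:ℝ) + nf := by linarith
  have harg : 1 < ((nr:ℝ) + nf) / δ := (one_lt_div hδ0).mpr (by linarith)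
  have hlogpos : 0 < Real.log (((nr:ℝ) + nf) / δ) := Real.log_pos harg
  have hdRpos : (0:ℝ) < (d:ℝ) := lt_of_lt_of_le (by linarith) hd
  have hd1 : 1 ≤ d := by
    have : 0 < d := by exact_mod_cast hdRpos
    omega
  -- measurable modifications
  have hae : ∀ p : Fin (nr + nf) × Fin d, AEMeasurable (ξ p.1 p.2) P := by
    intro p
    by_contra h
    have h2 := hmap p.1 p.2
    rw [Measure.map_of_not_aemeasurable h] at h2
    have h3 := congrArg (fun m : MeasureTheory.Measure ℝ => m Set.univ) h2
    simp only [Measure.coe_zero, Pi.zero_apply, measure_univ] at h3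
    exact zero_ne_one (h3.trans (@measure_univ _ _ _ (instIsProbabilityMeasureGaussianReal _ _)))
  set ξ' : Fin (nr + nf) × Fin d → Ω → ℝ := fun p => (hae p).mk _ with hξ'def
  have hmeas' : ∀ p, Measurable (ξ' p) := fun p => (hae p).measurable_mk
  have haeeq : ∀ p, (fun ω => ξ p.1 p.2 ω) =ᵐ[P] ξ' p := fun p => (hae p).ae_eq_mk
  have hindep' : iIndepFun ξ' P :=
    aux_iIndepFun_ae_congr haeeq hindep
  have hmap' : ∀ p, Measure.map (ξ' p) P = gaussianReal 0 ⟨σn ^ 2, sq_nonneg σn⟩ := by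
    intro p
    rw [← Measure.map_congr (haeeq p)]
    exact hmap p.1 p.2
  -- per-sample Chernoff bound
  have hA : ∀ i : Fin (nr + nf),
      P {ω | 4 * (d:ℝ) * σn ^ 2 ≤ ∑ c, (ξ' (i, c) ω) ^ 2} ≤
        ENNReal.ofReal (Real.exp (-(d:ℝ)/2)) := by
    intro i
    have hXindep : iIndepFun
        (fun c : Fin d => ξ' (i, c)) P :=
      aux_iIndepFun_reindex hindep' (fun c => (i, c))
        (fun c c' h => by simpa using congrArg Prod.snd h)
    exact aux_chernoff P hσ (fun c => ξ' (i, c)) (fun c => hmeas' (i, c)) hXindep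
      (fun c => hmap' (i, c))
  set bad : Set Ω :=
    (⋃ i : Fin (nr + nf), {ω | 4 * (d:ℝ) * σn ^ 2 ≤ ∑ c, (ξ' (i, c) ω) ^ 2}) ∪
      (⋃ p : Fin (nr + nf) × Fin d, {ω | ¬ (ξ p.1 p.2 ω = ξ' p ω)}) with hbaddef
  have hbad : P bad ≤ ENNReal.ofReal δ := by
    have hN : P (⋃ p : Fin (nr + nf) × Fin d, {ω | ¬ (ξ p.1 p.2 ω = ξ' p ω)}) = 0 :=
      measure_iUnion_null fun p => ae_iff.mp (haeeq p)
    have hkey : ((nr:ℝ) + nf) * Real.exp (-(d:ℝ)/2) ≤ δ := by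
      have hexp : Real.exp (-(d:ℝ)/2) ≤ δ / ((nr:ℝ) + nf) := by
        have h1 : -(d:ℝ)/2 ≤ -Real.log (((nr:ℝ) + nf) / δ) := by linarith
        have h2 : Real.exp (-Real.log (((nr:ℝ) + nf) / δ)) = δ / ((nr:ℝ) + nf) := by
          rw [Real.exp_neg, Real.exp_log (by positivity), inv_div]
        calc Real.exp (-(d:ℝ)/2) ≤ Real.exp (-Real.log (((nr:ℝ) + nf) / δ)) :=
              Real.exp_le_exp.mpr h1
          _ = δ / ((nr:ℝ) + nf) := h2
      calc ((nr:ℝ) + nf) * Real.exp (-(d:ℝ)/2)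
          ≤ ((nr:ℝ) + nf) * (δ / ((nr:ℝ) + nf)) :=
            mul_le_mul_of_nonneg_left hexp (le_of_lt hnpos)
        _ = δ := by field_simp
    calc P bad ≤ P (⋃ i : Fin (nr + nf),
          {ω | 4 * (d:ℝ) * σn ^ 2 ≤ ∑ c, (ξ' (i, c) ω) ^ 2}) +
          P (⋃ p : Fin (nr + nf) × Fin d, {ω | ¬ (ξ p.1 p.2 ω = ξ' p ω)}) :=
            measure_union_le _ _
      _ = P (⋃ i : Fin (nr + nf),
          {ω | 4 * (d:ℝ) * σn ^ 2 ≤ ∑ c, (ξ' (i, c) ω) ^ 2}) := by rw [hN, add_zero]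
      _ ≤ ∑ i : Fin (nr + nf),
            P {ω | 4 * (d:ℝ) * σn ^ 2 ≤ ∑ c, (ξ' (i, c) ω) ^ 2} :=
          measure_iUnion_fintype_le _ _
      _ ≤ ∑ _i : Fin (nr + nf), ENNReal.ofReal (Real.exp (-(d:ℝ)/2)) :=
          Finset.sum_le_sum fun i _ => hA i
      _ = ((nr + nf : ℕ) : ENNReal) * ENNReal.ofReal (Real.exp (-(d:ℝ)/2)) := by
          rw [Finset.sum_const, Finset.card_univ, Fintype.card_fin, nsmul_eq_mul]
      _ ≤ ENNReal.ofReal δ := by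
          rw [← ENNReal.ofReal_natCast, ← ENNReal.ofReal_mul (Nat.cast_nonneg _)]
          apply ENNReal.ofReal_le_ofReal
          calc ((nr + nf : ℕ) : ℝ) * Real.exp (-(d:ℝ)/2)
              = ((nr:ℝ) + nf) * Real.exp (-(d:ℝ)/2) := by push_cast; ring
            _ ≤ δ := hkey
  have hsub : Set.univ \ bad ⊆ {ω | ∀ (y ℓ : Fin (nr + nf) → ℝ)
      (a b : Fin (nr + nf) → Bool → Fin mfil → Bool),
      (∀ i, y i = 1 ∨ y i = -1) → (∀ i, ℓ i ∈ Set.Icc (0 : ℝ) 1) →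
      ∀ p : Fin nr × Fin nf,
        lamMax (DrfCNN d mfil nr nf μ (fun i c => ξ i c ω) y ℓ a b Cr' Cf' p) ≤
          16 * (Cr' + Cf') * d * σn ^ 2 *
            ((Real.sqrt (∑ c, (μ c) ^ 2) / (σn * Real.sqrt d)) ^ 2 + 1)} := by
    intro ω hω
    have hnb : ω ∉ bad := hω.2
    rw [hbaddef] at hnb
    simp only [Set.mem_union, Set.mem_iUnion, Set.mem_setOf_eq, not_or, not_exists] at hnb
    obtain ⟨hnb1, hnb2⟩ := hnb
    have heq : ∀ p : Fin (nr + nf) × Fin d, ξ p.1 p.2 ω = ξ' p ω :=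
      fun p => not_not.mp (hnb2 p)
    have hξb : ∀ i, ∑ c, (ξ i c ω) ^ 2 ≤ 4 * (d:ℝ) * σn ^ 2 := by
      intro i
      have he : (∑ c, (ξ i c ω) ^ 2) = ∑ c, (ξ' (i, c) ω) ^ 2 :=
        Finset.sum_congr rfl fun c _ => by rw [heq (i, c)]
      rw [he]
      exact le_of_lt (lt_of_not_ge (hnb1 i))
    intro y ℓ a b hy hℓ p
    exact aux_det hm hd1 μ hσ (le_of_lt hCr) (le_of_lt hCf)
      (fun i c => ξ i c ω) hξb y ℓ a b hy hℓ p
  refine le_trans ?_ (measure_mono hsub)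
  have h2 : ENNReal.ofReal (1 - 8 * δ) + P bad ≤ 1 := by
    rcases le_or_gt (1 - 8 * δ) 0 with h | h
    · rw [ENNReal.ofReal_eq_zero.mpr h, zero_add]
      exact le_trans hbad (ENNReal.ofReal_le_one.mpr (le_of_lt hδ1))
    · calc ENNReal.ofReal (1 - 8 * δ) + P bad
          ≤ ENNReal.ofReal (1 - 8 * δ) + ENNReal.ofReal δ := add_le_add_right hbad _
        _ = ENNReal.ofReal (1 - 8 * δ + δ) :=
            (ENNReal.ofReal_add (le_of_lt h) (le_of_lt hδ0)).symm
        _ ≤ 1 := ENNReal.ofReal_le_one.mpr (by linarith)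
  rw [← ENNReal.add_le_add_iff_right (measure_ne_top P bad)]
  calc ENNReal.ofReal (1 - 8 * δ) + P bad ≤ 1 := h2
    _ = P Set.univ := measure_univ.symm
    _ ≤ P (bad ∪ (Set.univ \ bad)) := measure_mono (fun ω _ => by
        by_cases hω : ω ∈ bad
        · exact Or.inl hω
        · exact Or.inr ⟨trivial, hω⟩)
    _ ≤ P bad + P (Set.univ \ bad) := measure_union_le _ _
    _ = P (Set.univ \ bad) + P bad := add_comm _ _


end
end

section
/- (Verification of the matching-lower-bound construction.) Fix d ≥ 1, η > 0, α ∈ [0,1), sizes n_r, n_f ≥ 1, batch size B with 0 < B < n_r and B ≤ n_f, a positive integer q ≤ n_r, and λ > 0; set σ = q n_f and m = λ n_r n_f / (C'_r σ). Define H_r^R = m e_1 e_1ᵀ for r = 1,…,q and H_r^R = 0 for r > q, and H_f^F = 0 for all f. Then: (i) the mix-Hessian satisfies D = λ e_1 e_1ᵀ, so λ_max(D) = λ; (ii) max_{(r,f)} λ_max(D_{rf}) = C'_r m; (iii) the mix-coherence matrix S has entries C'_r m at pairs ((r,f),(r',f')) with r, r' ≤ q and 0 elsewhere, and λ_max(S)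 = q n_f C'_r m; hence (iv) the unlearning coherence λ_max(S)/max_{(r,f)} λ_max(D_{rf}) equals σ. -/
open Matrix Filter Finset Set
open scoped BigOperators

noncomputable section

set_option linter.unusedSectionVars false

section Helpers
variable {ι : Type*} [Fintype ι] [DecidableEq ι]


def outer (c : ℝ) (u : ι → ℝ) : Matrix ι ι ℝ := Matrix.of fun p q => c * u p * u q

lemma outer_isHermitian (c : ℝ) (u : ι → ℝ) : (outer c u).IsHermitian := by
  ext p q
  simp only [outer, Matrix.conjTranspose_apply, Matrix.of_apply, star_trivial]
  ring

lemma outer_posSemidef (c : ℝ) (hc : 0 ≤ c) (u : ι → ℝ) : (outer c u).PosSemidef := by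
  refine Matrix.PosSemidef.of_dotProduct_mulVec_nonneg (outer_isHermitian c u) fun x => ?_
  have h : (star x) ⬝ᵥ (outer c u).mulVec x = c * (∑ q, u q * x q) ^ 2 := by
    simp only [dotProduct, mulVec, outer, Matrix.of_apply, star_trivial]
    have h1 : ∀ p, (∑ q, c * u p * u q * x q) = c * u p * (∑ q, u q * x q) := by
      intro p; rw [Finset.mul_sum]; exact Finset.sum_congr rfl fun q _ => by ring
    calc ∑ p, x p * ∑ q, c * u p * u q * x q
        = ∑ p, (u p * x p) * (c * (∑ q, u q * x q)) := by
          refine Finset.sum_congr rfl fun p _ => ?_; rw [h1]; ring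
      _ = (∑ p, u p * x p) * (c * (∑ q, u q * x q)) := by rw [← Finset.sum_mul]
      _ = c * (∑ q, u q * x q) ^ 2 := by ring
  rw [h]
  positivity

lemma outer_trace (c : ℝ) (u : ι → ℝ) : (outer c u).trace = c * ∑ p, u p * u p := by
  simp only [Matrix.trace, Matrix.diag_apply, outer, Matrix.of_apply]
  rw [Finset.mul_sum]
  exact Finset.sum_congr rfl fun p _ => by ring

lemma outer_trace_sq (c : ℝ) (u : ι → ℝ) :
    (outer c u * outer c u).trace = (c * ∑ p, u p * u p) * (c * ∑ p, u p * u p) := by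
  simp only [Matrix.trace, Matrix.diag_apply, Matrix.mul_apply, outer, Matrix.of_apply]
  have h1 : ∀ p : ι, ∑ q, c * u p * u q * (c * u q * u p)
      = (c * u p * u p) * (c * ∑ q, u q * u q) := by
    intro p
    rw [Finset.mul_sum, Finset.mul_sum]
    exact Finset.sum_congr rfl fun q _ => by ring
  rw [Finset.sum_congr rfl fun p _ => h1 p, ← Finset.sum_mul]
  congr 1
  rw [Finset.mul_sum]
  exact Finset.sum_congr rfl fun p _ => by ring

lemma trace_eq_sum_eig {A : Matrix ι ι ℝ} (hA : A.IsHermitian) :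
    A.trace = ∑ i, hA.eigenvalues i := by
  conv_lhs => rw [hA.spectral_theorem]
  simp only [Unitary.conjStarAlgAut_apply, Unitary.coe_star]
  rw [Matrix.trace_mul_cycle]
  rw [(Matrix.mem_unitaryGroup_iff').mp (Matrix.IsHermitian.eigenvectorUnitary hA).2, one_mul]
  simp [Matrix.trace_diagonal]

lemma trace_sq_eq_sum_eig {A : Matrix ι ι ℝ} (hA : A.IsHermitian) :
    (A * A).trace = ∑ i, (hA.eigenvalues i) ^ 2 := by
  have hV : star (hA.eigenvectorUnitary : Matrix ι ι ℝ) * (hA.eigenvectorUnitary : Matrix ι ι ℝ)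
      = 1 := (Matrix.mem_unitaryGroup_iff').mp (Matrix.IsHermitian.eigenvectorUnitary hA).2
  conv_lhs => rw [hA.spectral_theorem]
  simp only [Unitary.conjStarAlgAut_apply, Unitary.coe_star]
  simp only [Matrix.mul_assoc]
  rw [← Matrix.mul_assoc (star (hA.eigenvectorUnitary : Matrix ι ι ℝ)), hV, Matrix.one_mul]
  rw [Matrix.trace_mul_comm]
  simp only [Matrix.mul_assoc]
  rw [hV, Matrix.mul_one]
  rw [Matrix.diagonal_mul_diagonal]
  simp [Matrix.trace_diagonal, pow_two]

lemma lamMax_of_traces [Nonempty ι] {A : Matrix ι ι ℝ} (hA : A.PosSemidef) (t : ℝ)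
    (h1 : A.trace = t) (h2 : (A * A).trace = t * t) : lamMax A = t := by
  classical
  have hH := hA.1
  have hsum : ∑ i, hH.eigenvalues i = t := by rw [← trace_eq_sum_eig hH, h1]
  have hsq : ∑ i, (hH.eigenvalues i) ^ 2 = t * t := by rw [← trace_sq_eq_sum_eig hH, h2]
  have hnn : ∀ i, 0 ≤ hH.eigenvalues i := hA.eigenvalues_nonneg
  obtain ⟨j, hj⟩ := Finite.exists_max hH.eigenvalues
  have hts : lamMax A = hH.eigenvalues j := by
    rw [lamMax, dif_pos hH]
    exact le_antisymm (ciSup_le hj) (le_ciSup (Finite.bddAbove_range _) j)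
  rw [hts]
  have hub : (hH.eigenvalues j) ^ 2 ≤ t * t := by
    rw [← hsq]
    exact Finset.single_le_sum (f := fun i => (hH.eigenvalues i) ^ 2)
      (fun i _ => sq_nonneg _) (Finset.mem_univ j)
  have hlb : t * t ≤ hH.eigenvalues j * t := by
    calc t * t = ∑ i, (hH.eigenvalues i) ^ 2 := hsq.symm
      _ ≤ ∑ i, hH.eigenvalues j * hH.eigenvalues i := by
          refine Finset.sum_le_sum fun i _ => ?_
          rw [pow_two]
          exact mul_le_mul_of_nonneg_right (hj i) (hnn i)
      _ = hH.eigenvalues j * t := by rw [← Finset.mul_sum, hsum]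
  have ht : 0 ≤ t := by rw [← hsum]; exact Finset.sum_nonneg fun i _ => hnn i
  nlinarith [hnn j]

lemma lamMax_outer [Nonempty ι] (c : ℝ) (hc : 0 ≤ c) (u : ι → ℝ) :
    lamMax (outer c u) = c * ∑ p, u p * u p :=
  lamMax_of_traces (outer_posSemidef c hc u) _ (outer_trace c u) (outer_trace_sq c u)

lemma lamMax_zeroQ [Nonempty ι] : lamMax (0 : Matrix ι ι ℝ) = 0 :=
  lamMax_of_traces Matrix.PosSemidef.zero 0 (by simp) (by simp)

lemma stdBasis_eq_outer (i : ι) (t : ℝ) :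
    Matrix.single i i t = outer t (fun j => if j = i then 1 else 0) := by
  ext p q
  by_cases hp : i = p <;> by_cases hq : i = q
  · subst hp; subst hq; simp [outer, Matrix.single]
  · subst hp; simp [outer, Matrix.single, hq, Ne.symm hq]
  · subst hq; simp [outer, Matrix.single, hp, Ne.symm hp]
  · simp [outer, Matrix.single, hp, hq, Ne.symm hp, Ne.symm hq]

lemma sum_ind_single (i : ι) :
    ∑ j, (if j = i then (1:ℝ) else 0) * (if j = i then (1:ℝ) else 0) = 1 := by
  have h : ∀ j : ι, (if j = i then (1:ℝ) else 0) * (if j = i then (1:ℝ) else 0)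
      = if j = i then (1:ℝ) else 0 := fun j => by split_ifs <;> simp
  simp only [h]
  simp

lemma lamMax_stdBasis (i : ι) {c : ℝ} (hc : 0 ≤ c) :
    lamMax (Matrix.single i i c) = c := by
  have : Nonempty ι := ⟨i⟩
  rw [stdBasis_eq_outer, lamMax_outer c hc, sum_ind_single, mul_one]

lemma stdBasis_posSemidef (i : ι) {c : ℝ} (hc : 0 ≤ c) :
    (Matrix.single i i c).PosSemidef := by
  rw [stdBasis_eq_outer]; exact outer_posSemidef c hc _

lemma frob_stdBasis (i : ι) {c : ℝ} (hc : 0 ≤ c) :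
    frob (Matrix.single i i c) = c := by
  rw [frob]
  have h : ∀ p q : ι, ((Matrix.single i i c) p q) ^ 2
      = if i = p then (if i = q then c ^ 2 else 0) else 0 := by
    intro p q
    by_cases h1 : i = p <;> by_cases h2 : i = q <;> simp [Matrix.single, h1, h2]
  rw [Finset.sum_congr rfl fun p _ => Finset.sum_congr rfl fun q _ => h p q]
  simp [Real.sqrt_sq hc]

lemma frob_zero : frob (0 : Matrix ι ι ℝ) = 0 := by simp [frob]


lemma psdSqrt_eq_smul {ι : Type*} [Fintype ι] [DecidableEq ι] {A : Matrix ι ι ℝ}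
    (hA : A.PosSemidef) {c : ℝ} (hAA : A * A = c • A) :
    psdSqrt A = (Real.sqrt c / c) • A := by
  set U : Matrix ι ι ℝ := (hA.1.eigenvectorUnitary : Matrix ι ι ℝ) with hU
  have hV : star U * U = 1 := (Matrix.mem_unitaryGroup_iff').mp hA.1.eigenvectorUnitary.2
  have hV' : U * star U = 1 := (Matrix.mem_unitaryGroup_iff).mp hA.1.eigenvectorUnitary.2
  have hspec : A = U * Matrix.diagonal (RCLike.ofReal ∘ hA.1.eigenvalues) * star U := by
    conv_lhs => rw [hA.1.spectral_theorem]
    rfl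
  set D : Matrix ι ι ℝ := Matrix.diagonal (RCLike.ofReal ∘ hA.1.eigenvalues) with hD
  have hDA : D = star U * A * U := by
    conv_rhs => rw [hspec]
    simp only [← Matrix.mul_assoc, hV, Matrix.one_mul]
    rw [Matrix.mul_assoc, hV, Matrix.mul_one]
  have hDD : D * D = c • D := by
    calc D * D = star U * (A * A) * U := by
          rw [hDA]; simp only [Matrix.mul_assoc]
          rw [← Matrix.mul_assoc U (star U), hV', Matrix.one_mul]
      _ = c • D := by rw [hAA, Matrix.mul_smul, Matrix.smul_mul, hDA]
  have heig : ∀ j, hA.1.eigenvalues j * hA.1.eigenvalues j = c * hA.1.eigenvalues j := by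
    intro j
    have := congrFun (congrFun hDD j) j
    simpa [hD, Matrix.diagonal_mul_diagonal] using this
  have hsq : ∀ j, Real.sqrt (hA.1.eigenvalues j) = Real.sqrt c / c * hA.1.eigenvalues j := by
    intro j
    by_cases h0 : hA.1.eigenvalues j = 0
    · rw [h0]; simp
    · have he : hA.1.eigenvalues j = c := mul_right_cancel₀ h0 (heig j)
      have hc : c ≠ 0 := he ▸ h0
      rw [he, div_mul_cancel₀ _ hc]
  rw [psdSqrt, dif_pos hA]
  have hdiag : Matrix.diagonal ((RCLike.ofReal : ℝ → ℝ) ∘ Real.sqrt ∘ hA.1.eigenvalues)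
      = (Real.sqrt c / c) • D := by
    rw [hD]; ext a b; by_cases hab : a = b
    · subst hab; simp [hsq]
    · simp [hab]
  rw [hdiag, Matrix.mul_smul, Matrix.smul_mul]
  exact congrArg _ hspec.symm

lemma psdSqrt_stdBasis {ι : Type*} [Fintype ι] [DecidableEq ι] (i : ι) {c : ℝ} (hc : 0 ≤ c) :
    psdSqrt (Matrix.single i i c) = Matrix.single i i (Real.sqrt c) := by
  rw [psdSqrt_eq_smul (stdBasis_posSemidef i hc) (c := c)
    (by rw [Matrix.single_mul_single_same, Matrix.smul_single, smul_eq_mul])]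
  rw [Matrix.smul_single, smul_eq_mul]
  by_cases h0 : c = 0
  · subst h0; simp
  · rw [div_mul_cancel₀ _ h0]

lemma psdSqrt_zeroM {ι : Type*} [Fintype ι] [DecidableEq ι] :
    psdSqrt (0 : Matrix ι ι ℝ) = 0 := by
  rw [psdSqrt_eq_smul Matrix.PosSemidef.zero (c := 0) (by simp), smul_zero]

lemma count_fin (nr qn : ℕ) (hqn : qn ≤ nr) :
    ∑ r : Fin nr, (if (r : ℕ) < qn then (1:ℝ) else 0) = qn := by
  rw [Fin.sum_univ_eq_sum_range (fun i => if i < qn then (1:ℝ) else 0) nr]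
  have hf : (Finset.range nr).filter (fun i => i < qn) = Finset.range qn := by
    ext i; simp only [Finset.mem_filter, Finset.mem_range]; omega
  rw [Finset.sum_ite, Finset.sum_const, Finset.sum_const, hf, Finset.card_range]
  simp

end Helpers


/-- verification of the matching-lower-bound construction.  With
`H_r^R = m e₁e₁ᵀ` for `r ≤ q` (zero otherwise), all forget Hessians zero, `σ = q n_f`
and `m = λ n_r n_f/(C'_r σ)`: (i) `D = λ e₁e₁ᵀ` and `λ_max(D) = λ`;
(ii) `max_{(r,f)} λ_max(D_{rf}) = C'_r m`; (iii) `S` has entries `C'_r m` at pairs with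
`r, r' ≤ q` and `0` elsewhere, with `λ_max(S) = q n_f C'_r m`; hence (iv) the
unlearning coherence equals `σ`. -/
theorem stmt19 (d nr nf B qn : ℕ) (hd : 0 < d) (hnr : 1 ≤ nr) (hnf : 1 ≤ nf)
    (hB : 0 < B) (hBr : B < nr) (hBf : B ≤ nf) (hq : 1 ≤ qn) (hqn : qn ≤ nr)
    (η α : ℝ) (hη : 0 < η) (hα : α ∈ Set.Ico (0 : ℝ) 1)
    (hCr : 0 < Crc η α B nr) (hCf : 0 ≤ Cfc η α B nf)
    (lam : ℝ) (hlam : 0 < lam) :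
    let Cr' : ℝ := Real.sqrt (Crc η α B nr) /
      (Real.sqrt (Crc η α B nr) + Real.sqrt (Cfc η α B nf))
    let Cf' : ℝ := Real.sqrt (Cfc η α B nf) /
      (Real.sqrt (Crc η α B nr) + Real.sqrt (Cfc η α B nf))
    let σ : ℝ := (qn : ℝ) * nf
    let m : ℝ := lam * nr * nf / (Cr' * σ)
    let HRd : Fin nr → Matrix (Fin d) (Fin d) ℝ := fun r =>
      if (r : ℕ) < qn then Matrix.single (⟨0, hd⟩ : Fin d) (⟨0, hd⟩ : Fin d) m else 0
    let HFd : Fin nf → Matrix (Fin d) (Fin d) ℝ := fun _ => 0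
    Dmix Cr' Cf' HRd HFd
        = Matrix.single (⟨0, hd⟩ : Fin d) (⟨0, hd⟩ : Fin d) lam ∧
      lamMax (Dmix Cr' Cf' HRd HFd) = lam ∧
      (⨆ p : Fin nr × Fin nf, lamMax (Drf Cr' Cf' HRd HFd p)) = Cr' * m ∧
      (∀ p p' : Fin nr × Fin nf,
        Smat Cr' Cf' HRd HFd p p' =
          if (p.1 : ℕ) < qn ∧ (p'.1 : ℕ) < qn then Cr' * m else 0) ∧
      lamMax (Smat Cr' Cf' HRd HFd) = (qn : ℝ) * nf * (Cr' * m) ∧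
      cohSigma Cr' Cf' HRd HFd = σ := by
  intro Cr' Cf' σ m HRd HFd
  set i0 : Fin d := ⟨0, hd⟩ with hi0
  haveI : Nonempty (Fin d) := ⟨i0⟩
  haveI : Nonempty (Fin nr) := ⟨⟨0, by omega⟩⟩
  haveI : Nonempty (Fin nf) := ⟨⟨0, by omega⟩⟩
  have hnr0 : (0:ℝ) < nr := by exact_mod_cast Nat.lt_of_lt_of_le Nat.zero_lt_one hnr
  have hnf0 : (0:ℝ) < nf := by exact_mod_cast Nat.lt_of_lt_of_le Nat.zero_lt_one hnf
  have hqn0 : (0:ℝ) < qn := by exact_mod_cast Nat.lt_of_lt_of_le Nat.zero_lt_one hq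
  have hCr'pos : 0 < Cr' := div_pos (Real.sqrt_pos.mpr hCr)
    (add_pos_of_pos_of_nonneg (Real.sqrt_pos.mpr hCr) (Real.sqrt_nonneg _))
  have hσpos : 0 < σ := mul_pos hqn0 hnf0
  have hmpos : 0 < m := div_pos (by positivity) (mul_pos hCr'pos hσpos)
  set c : ℝ := Cr' * m with hc
  have hcpos : 0 < c := mul_pos hCr'pos hmpos
  have hkey : (qn:ℝ) * nf * c = lam * nr * nf := by
    rw [hc]
    unfold m σ
    field_simp
  have hDrf : ∀ p : Fin nr × Fin nf, Drf Cr' Cf' HRd HFd p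
      = if (p.1 : ℕ) < qn then Matrix.single i0 i0 c else 0 := by
    intro p
    unfold HRd HFd
    simp only [Drf, smul_zero, add_zero]
    split_ifs with h
    · rw [Matrix.smul_single, smul_eq_mul, hc]
    · rw [smul_zero]
  have hcount : ∑ p : Fin nr × Fin nf, (if (p.1 : ℕ) < qn then (1:ℝ) else 0)
      = (qn:ℝ) * nf := by
    rw [Fintype.sum_prod_type]
    have h1 : ∀ r : Fin nr, (∑ _f : Fin nf, (if (r : ℕ) < qn then (1:ℝ) else 0))
        = (if (r : ℕ) < qn then (1:ℝ) else 0) * nf := by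
      intro r
      rw [Finset.sum_const, Finset.card_univ, Fintype.card_fin, nsmul_eq_mul, mul_comm]
    rw [Finset.sum_congr rfl fun r _ => h1 r, ← Finset.sum_mul, count_fin nr qn hqn]
  have hsum : ∑ p : Fin nr × Fin nf, Drf Cr' Cf' HRd HFd p
      = Matrix.single i0 i0 ((qn:ℝ) * nf * c) := by
    ext a b
    rw [Matrix.sum_apply]
    have h1 : ∀ p : Fin nr × Fin nf, Drf Cr' Cf' HRd HFd p a b
        = (if (p.1 : ℕ) < qn then (1:ℝ) else 0) * (Matrix.single i0 i0 c a b) := by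
      intro p; rw [hDrf p]; split_ifs <;> simp
    rw [Finset.sum_congr rfl fun p _ => h1 p, ← Finset.sum_mul, hcount]
    simp only [Matrix.single, Matrix.of_apply, mul_ite, mul_zero]
  have hA : Dmix Cr' Cf' HRd HFd = Matrix.single i0 i0 lam := by
    have hlam' : ((nr:ℝ) * nf)⁻¹ * (lam * nr * nf) = lam := by field_simp
    rw [Dmix, hsum, Matrix.smul_single, smul_eq_mul, hkey, hlam']
  have hB : lamMax (Dmix Cr' Cf' HRd HFd) = lam := by
    rw [hA, lamMax_stdBasis i0 hlam.le]
  have hvals : ∀ p : Fin nr × Fin nf,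
      lamMax (Drf Cr' Cf' HRd HFd p) = if (p.1 : ℕ) < qn then c else 0 := by
    intro p
    rw [hDrf p]
    split_ifs
    · exact lamMax_stdBasis i0 hcpos.le
    · exact lamMax_zeroQ
  have hC : (⨆ p : Fin nr × Fin nf, lamMax (Drf Cr' Cf' HRd HFd p)) = c := by
    have hqn' : (0:ℕ) < qn := by omega
    apply le_antisymm
    · refine ciSup_le fun p => ?_
      rw [hvals p]; split_ifs
      · exact le_rfl
      · exact hcpos.le
    · have h := le_ciSup
        (Finite.bddAbove_range fun p : Fin nr × Fin nf => lamMax (Drf Cr' Cf' HRd HFd p))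
        ((⟨0, by omega⟩, ⟨0, by omega⟩) : Fin nr × Fin nf)
      rwa [hvals _, if_pos hqn'] at h
  have hD : ∀ p p' : Fin nr × Fin nf,
      Smat Cr' Cf' HRd HFd p p' =
        if (p.1 : ℕ) < qn ∧ (p'.1 : ℕ) < qn then c else 0 := by
    intro p p'
    simp only [Smat, Matrix.of_apply]
    rw [hDrf p, hDrf p']
    by_cases h1 : (p.1 : ℕ) < qn <;> by_cases h2 : (p'.1 : ℕ) < qn
    · rw [if_pos h1, if_pos h2, psdSqrt_stdBasis i0 hcpos.le, Matrix.single_mul_single_same,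
        Real.mul_self_sqrt hcpos.le, frob_stdBasis i0 hcpos.le, if_pos ⟨h1, h2⟩]
    · rw [if_pos h1, if_neg h2, psdSqrt_zeroM, Matrix.mul_zero, frob_zero, if_neg (by tauto)]
    · rw [if_neg h1, if_pos h2, psdSqrt_zeroM, Matrix.zero_mul, frob_zero, if_neg (by tauto)]
    · rw [if_neg h1, if_neg h2, psdSqrt_zeroM, Matrix.zero_mul, frob_zero, if_neg (by tauto)]
  have hE : lamMax (Smat Cr' Cf' HRd HFd) = (qn:ℝ) * nf * c := by
    have hS : Smat Cr' Cf' HRd HFd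
        = outer c (fun p : Fin nr × Fin nf => if (p.1 : ℕ) < qn then 1 else 0) := by
      ext p p'
      rw [hD p p']
      simp only [outer, Matrix.of_apply]
      by_cases h1 : (p.1 : ℕ) < qn <;> by_cases h2 : (p'.1 : ℕ) < qn <;>
        simp [h1, h2]
    rw [hS, lamMax_outer c hcpos.le]
    rw [mul_comm ((qn:ℝ) * nf) c]
    congr 1
    have h1 : ∀ p : Fin nr × Fin nf,
        (if (p.1 : ℕ) < qn then (1:ℝ) else 0) * (if (p.1 : ℕ) < qn then (1:ℝ) else 0)
          = if (p.1 : ℕ) < qn then (1:ℝ) else 0 := fun p => by split_ifs <;> simp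
    rw [Finset.sum_congr rfl fun p _ => h1 p, hcount]
  have hF : cohSigma Cr' Cf' HRd HFd = σ := by
    rw [cohSigma, hE, hC, mul_div_assoc, div_self (ne_of_gt hcpos), mul_one]
  exact ⟨hA, hB, hC, hD, hE, hF⟩

end
end
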